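/- Let P be a group and K a subgroup of P. For a subgroup X of P define inductively γ_K^0(X) = X and γ_K^{i+1}(X) = ⁅γ_K^i(X), K⁆. Let E be a subgroup of P, let k, c be integers with 1 ≤ k < c, and let A be a subgroup of P such that γ_K^k(E) ≤ A, A ≤ γ_K^c(E), and γ_K^c(A) is the trivial subgroup. Then A is the trivial subgroup. -/
import Mathlib


/-- `itComm X Y i` is the `i`-fold iterated commutator subgroup
`γ_Y^i(X) = ⁅…⁅⁅X,Y⁆,Y⁆,…,Y⁆` (with `i` copies of `Y`); `itComm X Y 0 = X`. -/
def itComm {P : Type*} [Group P] (X Y : Subgroup P) : ℕ → Subgroup P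
  | 0 => X
  | i + 1 => ⁅itComm X Y i, Y⁆

lemma itComm_mono {P : Type*} [Group P] {X X' : Subgroup P} (Y : Subgroup P) (h : X ≤ X') :
    ∀ i, itComm X Y i ≤ itComm X' Y i
  | 0 => h
  | i + 1 => Subgroup.commutator_mono (itComm_mono Y h i) le_rfl

lemma itComm_add {P : Type*} [Group P] (X Y : Subgroup P) (a : ℕ) :
    ∀ b, itComm X Y (a + b) = itComm (itComm X Y a) Y b
  | 0 => rfl
  | b + 1 => by
    show itComm X Y (a + b + 1) = ⁅itComm (itComm X Y a) Y b, Y⁆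
    rw [← itComm_add X Y a b]; rfl

lemma itComm_bot {P : Type*} [Group P] (Y : Subgroup P) : ∀ i, itComm (⊥ : Subgroup P) Y i = ⊥
  | 0 => rfl
  | i + 1 => by
    show ⁅itComm (⊥ : Subgroup P) Y i, Y⁆ = ⊥
    rw [itComm_bot Y i, Subgroup.commutator_bot_left]

/-- Let `P` be a group and `K` a subgroup of `P`.  For a subgroup `X` of `P` define inductively
`γ_K^0(X) = X` and `γ_K^{i+1}(X) = ⁅γ_K^i(X), K⁆`.  Let `E` be a subgroup of `P`, let `k, c` be
integers with `1 ≤ k < c`, and let `A` be a subgroup of `P` such that `γ_K^k(E) ≤ A`,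
`A ≤ γ_K^c(E)`, and `γ_K^c(A)` is trivial.  Then `A` is trivial. -/
theorem nilpotent_sandwich_trivial {P : Type*} [Group P] (K E A : Subgroup P) (k c : ℕ)
    (hk : 1 ≤ k) (hkc : k < c)
    (h1 : itComm E K k ≤ A) (h2 : A ≤ itComm E K c) (h3 : itComm A K c = ⊥) :
    A = ⊥ := by
  set m := c - k with hm
  have hm1 : 1 ≤ m := by omega
  have hAm : A ≤ itComm A K m := by
    have : itComm E K c = itComm (itComm E K k) K m := by
      rw [← itComm_add]; congr 1; omega
    calc A ≤ itComm E K c := h2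
    _ = itComm (itComm E K k) K m := this
    _ ≤ itComm A K m := itComm_mono K h1 m
  have key : ∀ n, A ≤ itComm A K (n * m) := by
    intro n
    induction n with
    | zero => simp [itComm]
    | succ n ih =>
      calc A ≤ itComm A K m := hAm
      _ ≤ itComm (itComm A K (n * m)) K m := itComm_mono K ih m
      _ = itComm A K ((n + 1) * m) := by rw [← itComm_add]; congr 1; ring
  have hcm : c ≤ c * m := Nat.le_mul_of_pos_right c (by omega)
  have : itComm A K (c * m) = ⊥ := by
    have : itComm A K (c * m) = itComm (itComm A K c) K (c * m - c) := by
      rw [← itComm_add]; congr 1; omega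
    rw [this, h3, itComm_bot]
  exact le_bot_iff.mp (this ▸ key c)
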